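/- Fix w' ∈ {0,1}^{Nξ}. The value Φ(w') = inf over ψ ∈ ℝ^{Ng} with ψ ≥ 0, x ∈ X, y^k ∈ Y (k = 1..K) of cᵀψ + sup_{ξ̄ ∈ Ξ} min_{k=1..K} { sup_{ξ ∈ Ξ(w', ξ̄)} ( ξᵀC x + ξᵀD w' + ξᵀQ y^k − ψᵀ g(ξ) ) subject to T(ξ)x + V(ξ)w' + W(ξ)y^k ≤ Hξ for all ξ ∈ Ξ(w', ξ̄), the k-th inner value being +∞ if this robust feasibility fails } equals the optimal value of the disjunctive problem: inf over θ ∈ ℝ, ψ ∈ ℝ^{Ng} with ψ ≥ 0, x ∈ X, y^k ∈ Y (k = 1..K), and sets Ξ^1, …, Ξ^K ⊆ ℝ^{Nξ} with ∪_{k=1..K} Ξ^k = Ξ, of θ, subject to, for every k = 1..K and every ξ̄ ∈ Ξ^k: θ ≥ cᵀψ + sup_{ξ ∈ Ξ(w', ξ̄)} ( ξᵀC x + ξᵀD w' + ξᵀQ y^k − ψᵀ g(ξ) ) and T(ξ)x + V(ξ)w' + W(ξ)y^k ≤ Hξ for all ξ ∈ Ξ(w', ξ̄). -/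

import Mathlib

open Matrix

noncomputable section

/-- The information set `Ξ(w, ξ̄) = {ξ ∈ Ξ : w ∘ ξ = w ∘ ξ̄}`. -/
def obsSet {n : ℕ} (Ξ : Set (Fin n → ℝ)) (w ξb : Fin n → ℝ) : Set (Fin n → ℝ) :=
  {ξ ∈ Ξ | w * ξ = w * ξb}

/-- The convex piecewise linear function `g` with `g_s(ξ) = max_{t} g_{st}ᵀ ξ`. -/
def gfun {Nξ Ng T : ℕ} (gst : Fin Ng → Fin T → (Fin Nξ → ℝ)) (ξ : Fin Nξ → ℝ) :
    Fin Ng → ℝ :=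
  fun s => ⨆ t : Fin T, gst s t ⬝ᵥ ξ

/-- The `l`-th uncertain constraint row `[T(ξ)x + V(ξ)w + W(ξ)y]_l`. -/
def rowLHS {Nξ Nx Ny L : ℕ} (Tm : Fin L → Matrix (Fin Nξ) (Fin Nx) ℝ)
    (Vm : Fin L → Matrix (Fin Nξ) (Fin Nξ) ℝ) (Wm : Fin L → Matrix (Fin Nξ) (Fin Ny) ℝ)
    (x : Fin Nx → ℝ) (w : Fin Nξ → ℝ) (y : Fin Ny → ℝ) (ξ : Fin Nξ → ℝ) (l : Fin L) : ℝ :=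
  ξ ⬝ᵥ (Tm l).mulVec x + ξ ⬝ᵥ (Vm l).mulVec w + ξ ⬝ᵥ (Wm l).mulVec y

lemma stmt8_aux1 (r θ : ℝ) (s : EReal) (h : (r : EReal) + s ≤ (θ : ℝ)) :
    s ≤ ((θ - r : ℝ) : EReal) := by
  induction s using EReal.rec with
  | bot => exact bot_le
  | coe u =>
      rw [← EReal.coe_add, EReal.coe_le_coe_iff] at h
      exact EReal.coe_le_coe_iff.mpr (by linarith)
  | top =>
      rw [EReal.add_top_of_ne_bot (EReal.coe_ne_bot r)] at h
      exact absurd h (by simp)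

lemma stmt8_aux2 (r θ : ℝ) (s : EReal) (h : s ≤ ((θ - r : ℝ) : EReal)) :
    (r : EReal) + s ≤ (θ : ℝ) := by
  calc (r : EReal) + s ≤ (r : EReal) + ((θ - r : ℝ) : EReal) := add_le_add_right h _
    _ = ((θ : ℝ) : EReal) := by rw [← EReal.coe_add]; norm_num

/-- Proposition 1: for fixed measurement decision `w'`, the value `Φ(w')` of
the K-adaptability problem equals the optimal value of the disjunctive reformulation in which
the partition sets `Ξ^1, …, Ξ^K` covering `Ξ` are decision variables. -/
theorem stmt8 (Nξ Nx Ny Ng L R T K : ℕ) (hT : 0 < T) (hK : 0 < K)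
    (A : Matrix (Fin R) (Fin Nξ) ℝ) (b : Fin R → ℝ)
    (Ξ : Set (Fin Nξ → ℝ)) (hΞ : Ξ = {ξ | A.mulVec ξ ≤ b})
    (hΞne : Ξ.Nonempty) (hΞbdd : Bornology.IsBounded Ξ)
    (Xset : Set (Fin Nx → ℝ)) (Yset : Set (Fin Ny → ℝ))
    (C : Matrix (Fin Nξ) (Fin Nx) ℝ) (D : Matrix (Fin Nξ) (Fin Nξ) ℝ)
    (Q : Matrix (Fin Nξ) (Fin Ny) ℝ) (H : Matrix (Fin L) (Fin Nξ) ℝ)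
    (Tm : Fin L → Matrix (Fin Nξ) (Fin Nx) ℝ)
    (Vm : Fin L → Matrix (Fin Nξ) (Fin Nξ) ℝ)
    (Wm : Fin L → Matrix (Fin Nξ) (Fin Ny) ℝ)
    (gst : Fin Ng → Fin T → (Fin Nξ → ℝ)) (c : Fin Ng → ℝ)
    (w' : Fin Nξ → ℝ) (hw' : ∀ i, w' i = 0 ∨ w' i = 1) :
    -- Φ(w')
    sInf {v : EReal |
      ∃ (ψ : Fin Ng → ℝ) (x : Fin Nx → ℝ) (y : Fin K → Fin Ny → ℝ),
        0 ≤ ψ ∧ x ∈ Xset ∧ (∀ k, y k ∈ Yset) ∧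
        v = ((c ⬝ᵥ ψ : ℝ) : EReal) +
          ⨆ ξb ∈ Ξ, ⨅ (k : Fin K)
              (_ : ∀ ξ ∈ obsSet Ξ w' ξb, ∀ l,
                rowLHS Tm Vm Wm x w' (y k) ξ l ≤ H.mulVec ξ l),
            ⨆ ξ ∈ obsSet Ξ w' ξb,
              ((ξ ⬝ᵥ C.mulVec x + ξ ⬝ᵥ D.mulVec w' + ξ ⬝ᵥ Q.mulVec (y k)
                - ψ ⬝ᵥ gfun gst ξ : ℝ) : EReal)}
    =
    -- value of the disjunctive problem
    sInf {v : EReal |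
      ∃ (θ : ℝ) (ψ : Fin Ng → ℝ) (x : Fin Nx → ℝ) (y : Fin K → Fin Ny → ℝ)
        (Ξk : Fin K → Set (Fin Nξ → ℝ)),
        0 ≤ ψ ∧ x ∈ Xset ∧ (∀ k, y k ∈ Yset) ∧
        (⋃ k, Ξk k) = Ξ ∧
        (∀ k, ∀ ξb ∈ Ξk k,
          (((c ⬝ᵥ ψ : ℝ) : EReal) +
            ⨆ ξ ∈ obsSet Ξ w' ξb,
              ((ξ ⬝ᵥ C.mulVec x + ξ ⬝ᵥ D.mulVec w' + ξ ⬝ᵥ Q.mulVec (y k)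
                - ψ ⬝ᵥ gfun gst ξ : ℝ) : EReal)) ≤ ((θ : ℝ) : EReal) ∧
          (∀ ξ ∈ obsSet Ξ w' ξb, ∀ l,
            rowLHS Tm Vm Wm x w' (y k) ξ l ≤ H.mulVec ξ l)) ∧
        v = ((θ : ℝ) : EReal)} := by
  haveI hKne : Nonempty (Fin K) := ⟨⟨0, hK⟩⟩
  apply le_antisymm
  · -- sInf Φ ≤ sInf disjunctive
    apply le_sInf
    rintro v ⟨θ, ψ, x, y, Ξk, hψ, hx, hy, hcover, hcon, rfl⟩
    set r : ℝ := c ⬝ᵥ ψ with hr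
    refine sInf_le_of_le ⟨ψ, x, y, hψ, hx, hy, rfl⟩ ?_
    refine stmt8_aux2 r θ _ ?_
    refine iSup₂_le fun ξb hξb => ?_
    have hmem : ξb ∈ ⋃ k, Ξk k := hcover.symm ▸ hξb
    obtain ⟨k, hk⟩ := Set.mem_iUnion.mp hmem
    obtain ⟨hle, hfeas⟩ := hcon k ξb hk
    exact le_trans (iInf₂_le k hfeas) (stmt8_aux1 r θ _ hle)
  · -- sInf disjunctive ≤ sInf Φ
    apply le_sInf
    rintro v ⟨ψ, x, y, hψ, hx, hy, rfl⟩
    set r : ℝ := c ⬝ᵥ ψ with hr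
    set g : Fin K → (Fin Nξ → ℝ) → EReal := fun k ξb =>
      ⨆ ξ ∈ obsSet Ξ w' ξb,
        ((ξ ⬝ᵥ C.mulVec x + ξ ⬝ᵥ D.mulVec w' + ξ ⬝ᵥ Q.mulVec (y k)
          - ψ ⬝ᵥ gfun gst ξ : ℝ) : EReal) with hg
    set P : Fin K → (Fin Nξ → ℝ) → Prop := fun k ξb =>
      ∀ ξ ∈ obsSet Ξ w' ξb, ∀ l,
        rowLHS Tm Vm Wm x w' (y k) ξ l ≤ H.mulVec ξ l with hP
    set h : (Fin Nξ → ℝ) → Fin K → EReal := fun ξb k => ⨅ (_ : P k ξb), g k ξb with hh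
    set U : EReal := ⨆ ξb ∈ Ξ, ⨅ k, h ξb k with hU
    -- the goal's iSup equals U
    have hUgoal : ((r : ℝ) : EReal) +
        (⨆ ξb ∈ Ξ, ⨅ (k : Fin K)
            (_ : ∀ ξ ∈ obsSet Ξ w' ξb, ∀ l,
              rowLHS Tm Vm Wm x w' (y k) ξ l ≤ H.mulVec ξ l),
          ⨆ ξ ∈ obsSet Ξ w' ξb,
            ((ξ ⬝ᵥ C.mulVec x + ξ ⬝ᵥ D.mulVec w' + ξ ⬝ᵥ Q.mulVec (y k)
              - ψ ⬝ᵥ gfun gst ξ : ℝ) : EReal)) = (r : EReal) + U := rfl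
    rw [hUgoal]
    by_cases hTop : U = ⊤
    · rw [hTop, EReal.add_top_of_ne_bot (EReal.coe_ne_bot r)]
      exact le_top
    -- U ≠ ⊥
    have hBot : U ≠ ⊥ := by
      obtain ⟨ξb0, hξb0⟩ := hΞne
      have hself : ξb0 ∈ obsSet Ξ w' ξb0 := ⟨hξb0, rfl⟩
      set f : Fin K → ℝ := fun k =>
        ξb0 ⬝ᵥ C.mulVec x + ξb0 ⬝ᵥ D.mulVec w' + ξb0 ⬝ᵥ Q.mulVec (y k)
          - ψ ⬝ᵥ gfun gst ξb0 with hf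
      obtain ⟨k1, hk1⟩ := Finite.exists_min f
      have hlow : ((f k1 : ℝ) : EReal) ≤ U := by
        refine le_trans ?_ (le_iSup₂ (f := fun ξb (_ : ξb ∈ Ξ) => ⨅ k, h ξb k) ξb0 hξb0)
        refine le_iInf fun k => ?_
        by_cases hp : P k ξb0
        · rw [hh]
          simp only [iInf_pos hp]
          refine le_trans (EReal.coe_le_coe_iff.mpr (hk1 k)) ?_
          exact le_iSup₂ (f := fun ξ (_ : ξ ∈ obsSet Ξ w' ξb0) =>
            ((ξ ⬝ᵥ C.mulVec x + ξ ⬝ᵥ D.mulVec w' + ξ ⬝ᵥ Q.mulVec (y k)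
              - ψ ⬝ᵥ gfun gst ξ : ℝ) : EReal)) ξb0 hself
        · rw [hh]; simp only [iInf_neg hp]; exact le_top
      intro hb
      rw [hb] at hlow
      exact absurd (le_bot_iff.mp hlow) (EReal.coe_ne_bot _)
    set u : ℝ := U.toReal with hu
    have hcoe : (u : EReal) = U := EReal.coe_toReal hTop hBot
    set θ : ℝ := r + u with hθ
    -- the partition sets
    set Ξk : Fin K → Set (Fin Nξ → ℝ) := fun k =>
      {ξb | ξb ∈ Ξ ∧ P k ξb ∧ ((r : ℝ) : EReal) + g k ξb ≤ ((θ : ℝ) : EReal)} with hΞk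
    have hcover : (⋃ k, Ξk k) = Ξ := by
      apply Set.Subset.antisymm
      · refine Set.iUnion_subset fun k ξb hξb => hξb.1
      · intro ξb hξb
        obtain ⟨k0, hk0⟩ := Finite.exists_min (h ξb)
        have hinfle : h ξb k0 ≤ U := by
          refine le_trans ?_ (le_iSup₂ (f := fun ξb (_ : ξb ∈ Ξ) => ⨅ k, h ξb k) ξb hξb)
          exact le_iInf hk0
        rw [← hcoe] at hinfle
        have hp : P k0 ξb := by
          by_contra hp
          rw [hh] at hinfle
          simp only [iInf_neg hp] at hinfle
          exact absurd (top_le_iff.mp hinfle) (EReal.coe_ne_top u)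
        have hgle : g k0 ξb ≤ ((u : ℝ) : EReal) := by
          rw [hh] at hinfle; simpa only [iInf_pos hp] using hinfle
        refine Set.mem_iUnion.mpr ⟨k0, hξb, hp, ?_⟩
        calc ((r : ℝ) : EReal) + g k0 ξb ≤ (r : EReal) + (u : EReal) :=
              add_le_add_right hgle _
          _ = ((θ : ℝ) : EReal) := by rw [hθ, EReal.coe_add]
    refine sInf_le ⟨θ, ψ, x, y, Ξk, hψ, hx, hy, hcover, ?_, ?_⟩
    · intro k ξb hξb
      exact ⟨hξb.2.2, hξb.2.1⟩
    · rw [hθ, EReal.coe_add, hcoe]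

end
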